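/- Let C = {v_0,...,v_{2n}} be a uniform balanced configuration labeled by increasing arguments. Then exactly n of the indices i ∈ {1,...,2n} satisfy det(v_0,v_i) > 0; consequently the polar angles satisfy α_n - α_0 < π < α_{n+1} - α_0. -/
import Mathlib


noncomputable section
open Real

/-- Determinant of two plane vectors, identifying `ℝ²` with `ℂ`: `det(z,w) = Im(z̄·w)`. -/
def cdet (z w : ℂ) : ℝ := z.re * w.im - z.im * w.re

/-- A configuration is balanced if for every index `i` and every real `x`, the number of
indices `j ≠ i` with `cdet (v i) (v j) = x` equals the number with value `-x`. -/
def BalancedConfig {m : ℕ} (v : Fin m → ℂ) : Prop :=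
  ∀ i : Fin m, ∀ x : ℝ,
    {j : Fin m | j ≠ i ∧ cdet (v i) (v j) = x}.ncard =
    {j : Fin m | j ≠ i ∧ cdet (v i) (v j) = -x}.ncard

/-- A configuration is uniform if every pair of distinct vectors is linearly independent
over `ℝ`. -/
def UniformConfig {m : ℕ} (v : Fin m → ℂ) : Prop :=
  ∀ i j : Fin m, i ≠ j → LinearIndependent ℝ ![v i, v j]

lemma ncard_filter_eq {m : ℕ} (p : Fin m → Prop) [DecidablePred p] :
    {j : Fin m | p j}.ncard = (Finset.univ.filter p).card := by
  rw [Set.ncard_eq_toFinset_card']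
  congr 1
  ext j
  simp

open Finset in
lemma count_pos_eq_count_neg {m : ℕ} (D : Fin m → ℝ) (z : Fin m)
    (hbal : ∀ x : ℝ, (univ.filter fun j => j ≠ z ∧ D j = x).card
      = (univ.filter fun j => j ≠ z ∧ D j = -x).card) :
    (univ.filter fun j : Fin m => j ≠ z ∧ 0 < D j).card
      = (univ.filter fun j : Fin m => j ≠ z ∧ D j < 0).card := by
  set f : ℝ → ℕ := fun x => (univ.filter fun j => j ≠ z ∧ D j = x).card with hf
  set P := univ.filter fun j : Fin m => j ≠ z ∧ 0 < D j with hP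
  set N := univ.filter fun j : Fin m => j ≠ z ∧ D j < 0 with hN
  have hPcard : P.card = ∑ x ∈ P.image D, f x := by
    rw [Finset.card_eq_sum_card_fiberwise (f := D) (t := P.image D)
      (fun j hj => mem_image_of_mem D hj)]
    refine Finset.sum_congr rfl fun x hx => ?_
    obtain ⟨j0, hj0, hj0x⟩ := mem_image.mp hx
    have hx0 : 0 < x := hj0x ▸ (mem_filter.mp hj0).2.2
    congr 1
    ext j
    simp only [hP, mem_filter, mem_univ, true_and]
    constructor
    · rintro ⟨⟨h1, _⟩, h3⟩; exact ⟨h1, h3⟩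
    · rintro ⟨h1, h3⟩; exact ⟨⟨h1, h3 ▸ hx0⟩, h3⟩
  have hNcard : N.card = ∑ x ∈ N.image D, f x := by
    rw [Finset.card_eq_sum_card_fiberwise (f := D) (t := N.image D)
      (fun j hj => mem_image_of_mem D hj)]
    refine Finset.sum_congr rfl fun x hx => ?_
    obtain ⟨j0, hj0, hj0x⟩ := mem_image.mp hx
    have hx0 : x < 0 := hj0x ▸ (mem_filter.mp hj0).2.2
    congr 1
    ext j
    simp only [hN, mem_filter, mem_univ, true_and]
    constructor
    · rintro ⟨⟨h1, _⟩, h3⟩; exact ⟨h1, h3⟩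
    · rintro ⟨h1, h3⟩; exact ⟨⟨h1, h3 ▸ hx0⟩, h3⟩
  have himg : N.image D = (P.image D).image (fun x => -x) := by
    ext x
    simp only [mem_image, hP, hN, mem_filter, mem_univ, true_and]
    constructor
    · rintro ⟨j, ⟨hjz, hjneg⟩, rfl⟩
      have h1 : 1 ≤ f (D j) := by
        rw [hf]
        refine Finset.card_pos.mpr ⟨j, ?_⟩
        simp [hjz]
      have h2 : 1 ≤ f (-(D j)) := by
        show 1 ≤ (Finset.univ.filter fun j' => j' ≠ z ∧ D j' = -(D j)).card
        rw [← hbal (D j)]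
        exact h1
      obtain ⟨j', hj'⟩ := Finset.card_pos.mp h2
      simp only [hf, mem_filter, mem_univ, true_and] at hj'
      exact ⟨-(D j), ⟨j', ⟨hj'.1, hj'.2 ▸ by linarith⟩, hj'.2⟩, by ring⟩
    · rintro ⟨y, ⟨j, ⟨hjz, hjpos⟩, rfl⟩, rfl⟩
      have h1 : 1 ≤ f (D j) := by
        rw [hf]
        refine Finset.card_pos.mpr ⟨j, ?_⟩
        simp [hjz]
      have h2 : 1 ≤ f (-(D j)) := by
        show 1 ≤ (Finset.univ.filter fun j' => j' ≠ z ∧ D j' = -(D j)).card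
        rw [← hbal (D j)]
        exact h1
      obtain ⟨j', hj'⟩ := Finset.card_pos.mp h2
      simp only [hf, mem_filter, mem_univ, true_and] at hj'
      exact ⟨j', ⟨hj'.1, hj'.2 ▸ by linarith⟩, hj'.2⟩
  rw [hPcard, hNcard, himg,
    Finset.sum_image (fun x _ y _ h => neg_injective h)]
  refine Finset.sum_congr rfl fun x _ => ?_
  show (Finset.univ.filter fun j => j ≠ z ∧ D j = x).card
      = (Finset.univ.filter fun j => j ≠ z ∧ D j = -x).card
  exact hbal x

lemma sin_ne_zero_of_mem {θ : ℝ} (h0 : 0 < θ) (h2 : θ < 2 * π) (hne : θ ≠ π) :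
    Real.sin θ ≠ 0 := by
  intro h
  obtain ⟨k, hk⟩ := Real.sin_eq_zero_iff.mp h
  have hπ := Real.pi_pos
  have hk0 : 0 < (k : ℝ) := by nlinarith
  have hk2 : (k : ℝ) < 2 := by nlinarith
  have h1k : 0 < k := by exact_mod_cast hk0
  have h2k : k < 2 := by exact_mod_cast hk2
  have hk1 : k = 1 := by omega
  rw [hk1] at hk
  push_cast at hk
  exact hne (by linarith)

lemma sin_pos_iff_lt_pi {θ : ℝ} (h0 : 0 < θ) (h2 : θ < 2 * π) (hne : θ ≠ π) :
    0 < Real.sin θ ↔ θ < π := by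
  constructor
  · intro hs
    by_contra hge
    push_neg at hge
    have hgt : π < θ := lt_of_le_of_ne hge (Ne.symm hne)
    have : Real.sin θ < 0 := by
      have : Real.sin θ = -Real.sin (θ - π) := by
        rw [← Real.sin_add_pi]; ring_nf
      rw [this]
      have := Real.sin_pos_of_pos_of_lt_pi (x := θ - π) (by linarith) (by linarith)
      linarith
    linarith
  · intro h
    exact Real.sin_pos_of_pos_of_lt_pi h0 h
open Finset in
theorem half_positive_dets (n : ℕ) (hn : 1 ≤ n)
    (v : Fin (2 * n + 1) → ℂ)
    (hbal : BalancedConfig v) (hunif : UniformConfig v)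
    (ρ α : Fin (2 * n + 1) → ℝ)
    (hρ : ∀ i, 0 < ρ i)
    (hα : ∀ i, α i ∈ Set.Ico 0 (2 * π))
    (hmono : StrictMono α)
    (hv : ∀ i, v i = (ρ i : ℂ) * Complex.exp (α i * Complex.I)) :
    {i : Fin (2 * n + 1) | i ≠ ⟨0, by omega⟩ ∧ 0 < cdet (v ⟨0, by omega⟩) (v i)}.ncard = n ∧
    α ⟨n, by omega⟩ - α ⟨0, by omega⟩ < π ∧
    π < α ⟨n + 1, by omega⟩ - α ⟨0, by omega⟩ := by
  have hπ := Real.pi_pos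
  set z : Fin (2 * n + 1) := ⟨0, by omega⟩ with hz
  have hvalpos : ∀ i : Fin (2 * n + 1), i ≠ z → 0 < i.val := by
    intro i hi
    by_contra h
    refine hi (Fin.ext ?_)
    show i.val = 0
    omega
  have hzlt : ∀ i, i ≠ z → α z < α i := fun i hi => hmono (by
    show z < i
    rw [Fin.lt_def]
    exact hvalpos i hi)
  have hθ : ∀ i, i ≠ z → 0 < α i - α z ∧ α i - α z < 2 * π := by
    intro i hi
    have h1 := hzlt i hi
    have h2 := (hα i).2
    have h3 := (hα z).1
    exact ⟨by linarith, by linarith⟩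
  have hDform : ∀ i, cdet (v z) (v i) = ρ z * ρ i * Real.sin (α i - α z) := by
    intro i
    rw [hv z, hv i]
    simp only [cdet, Complex.mul_re, Complex.mul_im, Complex.ofReal_re, Complex.ofReal_im,
      Complex.exp_ofReal_mul_I_re, Complex.exp_ofReal_mul_I_im, Real.sin_sub]
    ring
  have hθne : ∀ i, i ≠ z → α i - α z ≠ π := by
    intro i hi heq
    have hvi : v i = -((ρ i : ℂ) * Complex.exp ((α z : ℂ) * Complex.I)) := by
      rw [hv i]
      have hαi : (α i : ℝ) = α z + π := by linarith
      rw [hαi]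
      push_cast
      rw [add_mul, Complex.exp_add, Complex.exp_pi_mul_I]
      ring
    have hli := hunif z i (Ne.symm hi)
    rw [LinearIndependent.pair_iff] at hli
    have := (hli (ρ i) (ρ z) (by
      rw [hv z, hvi, Complex.real_smul, Complex.real_smul]
      ring)).1
    exact (hρ i).ne' this
  have hDne : ∀ i, i ≠ z → cdet (v z) (v i) ≠ 0 := by
    intro i hi
    rw [hDform]
    obtain ⟨h1, h2⟩ := hθ i hi
    exact mul_ne_zero (mul_ne_zero (hρ z).ne' (hρ i).ne')
      (sin_ne_zero_of_mem h1 h2 (hθne i hi))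
  have hDpos : ∀ i, i ≠ z → (0 < cdet (v z) (v i) ↔ α i - α z < π) := by
    intro i hi
    rw [hDform]
    obtain ⟨h1, h2⟩ := hθ i hi
    rw [← sin_pos_iff_lt_pi h1 h2 (hθne i hi)]
    constructor
    · intro h
      nlinarith [mul_pos (hρ z) (hρ i)]
    · intro h
      exact mul_pos (mul_pos (hρ z) (hρ i)) h
  have hbalz : ∀ x : ℝ, (univ.filter fun j => j ≠ z ∧ cdet (v z) (v j) = x).card
      = (univ.filter fun j => j ≠ z ∧ cdet (v z) (v j) = -x).card := by
    intro x
    have := hbal z x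
    rwa [ncard_filter_eq, ncard_filter_eq] at this
  set P := univ.filter fun i : Fin (2 * n + 1) => i ≠ z ∧ 0 < cdet (v z) (v i) with hPdef
  set N := univ.filter fun i : Fin (2 * n + 1) => i ≠ z ∧ cdet (v z) (v i) < 0 with hNdef
  have hPN : P.card = N.card := count_pos_eq_count_neg _ z hbalz
  have hsum : P.card + N.card = 2 * n := by
    have e1 : P = (univ.filter fun j : Fin (2 * n + 1) => j ≠ z).filter
        fun j => 0 < cdet (v z) (v j) := by
      rw [Finset.filter_filter]
    have e2 : N = (univ.filter fun j : Fin (2 * n + 1) => j ≠ z).filter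
        fun j => ¬ 0 < cdet (v z) (v j) := by
      rw [Finset.filter_filter]
      ext j
      simp only [hNdef, Finset.mem_filter, Finset.mem_univ, true_and]
      constructor
      · rintro ⟨h1, h2⟩; exact ⟨h1, by linarith⟩
      · rintro ⟨h1, h2⟩
        exact ⟨h1, lt_of_le_of_ne (not_lt.mp h2) (hDne j h1)⟩
    rw [e1, e2, Finset.card_filter_add_card_filter_not]
    rw [Finset.filter_ne', Finset.card_erase_of_mem (Finset.mem_univ z)]
    simp
  have hPcard : P.card = n := by omega
  have hPalt : ∀ i, i ∈ P ↔ i ≠ z ∧ α i - α z < π := by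
    intro i
    simp only [hPdef, Finset.mem_filter, Finset.mem_univ, true_and]
    constructor
    · rintro ⟨h1, h2⟩; exact ⟨h1, (hDpos i h1).mp h2⟩
    · rintro ⟨h1, h2⟩; exact ⟨h1, (hDpos i h1).mpr h2⟩
  have hnz : (⟨n, by omega⟩ : Fin (2 * n + 1)) ≠ z := by
    intro h
    have := congrArg Fin.val h
    simp [hz] at this
    omega
  have hn1z : (⟨n + 1, by omega⟩ : Fin (2 * n + 1)) ≠ z := by
    intro h
    have := congrArg Fin.val h
    simp [hz] at this
  have hmemn : (⟨n, by omega⟩ : Fin (2 * n + 1)) ∈ P := by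
    by_contra hno
    have hge : π ≤ α ⟨n, by omega⟩ - α z := by
      by_contra hlt
      push_neg at hlt
      exact hno ((hPalt _).mpr ⟨hnz, hlt⟩)
    have hsub : ∀ i ∈ P, i.val ∈ Finset.Ico 1 n := by
      intro i hiP
      obtain ⟨h1, h2⟩ := (hPalt i).mp hiP
      refine Finset.mem_Ico.mpr ⟨hvalpos i h1, ?_⟩
      by_contra hge'
      push_neg at hge'
      have hle : (⟨n, by omega⟩ : Fin (2 * n + 1)) ≤ i := by
        rw [Fin.le_def]
        exact hge'
      have := hmono.le_iff_le.mpr hle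
      linarith
    have := Finset.card_le_card_of_injOn Fin.val hsub (fun a _ b _ h => Fin.ext h)
    rw [hPcard, Nat.card_Ico] at this
    omega
  have hmemn1 : (⟨n + 1, by omega⟩ : Fin (2 * n + 1)) ∉ P := by
    intro hyes
    have hlt : α ⟨n + 1, by omega⟩ - α z < π := ((hPalt _).mp hyes).2
    have hsub : ∀ k ∈ Finset.Icc 1 (n + 1),
        (⟨k % (2 * n + 1), Nat.mod_lt _ (by omega)⟩ : Fin (2 * n + 1)) ∈ P := by
      intro k hk
      obtain ⟨hk1, hk2⟩ := Finset.mem_Icc.mp hk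
      have hkm : k % (2 * n + 1) = k := Nat.mod_eq_of_lt (by omega)
      refine (hPalt _).mpr ⟨?_, ?_⟩
      · intro h
        have := congrArg Fin.val h
        simp [hz, hkm] at this
        omega
      · have hle : (⟨k % (2 * n + 1), Nat.mod_lt _ (by omega)⟩ : Fin (2 * n + 1))
            ≤ ⟨n + 1, by omega⟩ := by
          rw [Fin.le_def]
          simp [hkm]
          omega
        have := hmono.le_iff_le.mpr hle
        linarith
    have hinj : ∀ a ∈ Finset.Icc 1 (n + 1), ∀ b ∈ Finset.Icc 1 (n + 1),
        (⟨a % (2 * n + 1), Nat.mod_lt _ (by omega)⟩ : Fin (2 * n + 1))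
          = ⟨b % (2 * n + 1), Nat.mod_lt _ (by omega)⟩ → a = b := by
      intro a ha b hb h
      obtain ⟨ha1, ha2⟩ := Finset.mem_Icc.mp ha
      obtain ⟨hb1, hb2⟩ := Finset.mem_Icc.mp hb
      have := congrArg Fin.val h
      simp only [Fin.val_mk] at this
      rw [Nat.mod_eq_of_lt (by omega), Nat.mod_eq_of_lt (by omega)] at this
      exact this
    have := Finset.card_le_card_of_injOn _ hsub hinj
    rw [hPcard, Nat.card_Icc] at this
    omega
  refine ⟨?_, ?_, ?_⟩
  · rw [ncard_filter_eq]
    exact hPcard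
  · exact ((hPalt _).mp hmemn).2
  · have h1 : ¬(α ⟨n + 1, by omega⟩ - α z < π) := fun h =>
      hmemn1 ((hPalt _).mpr ⟨hn1z, h⟩)
    push_neg at h1
    exact lt_of_le_of_ne h1 (Ne.symm (hθne _ hn1z))
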